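/- Define p(α) = (1/√(2π)) · Γ(α+1/2)² · Γ(α+3/2) / (Γ(α+3/4) · Γ(α+1) · Γ(α+5/4)). Then √(2πα) · p(α) → 1 as α → ∞ (over the positive reals). -/

import Mathlib

open Real Filter

/-- The X-state separability probability function. -/
noncomputable def p (α : ℝ) : ℝ :=
  (1 / Real.sqrt (2*π)) * (Gamma (α + 1/2)^2 * Gamma (α + 3/2) /
    (Gamma (α + 3/4) * Gamma (α + 1) * Gamma (α + 5/4)))

lemma wendel_upper {s x : ℝ} (hs0 : 0 < s) (hs1 : s < 1) (hx : 0 < x) :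
    Gamma (x + s) ≤ Gamma x * x ^ s := by
  have key := Real.Gamma_mul_add_mul_le_rpow_Gamma_mul_rpow_Gamma
    (s := x) (t := x + 1) hx (by linarith) (by linarith : (0:ℝ) < 1 - s) hs0 (by ring)
  rw [show (1 - s) * x + s * (x + 1) = x + s by ring, Real.Gamma_add_one hx.ne'] at key
  have hΓ : 0 < Gamma x := Real.Gamma_pos_of_pos hx
  calc Gamma (x + s) ≤ Gamma x ^ (1 - s) * (x * Gamma x) ^ s := key
    _ = Gamma x * x ^ s := by
        rw [Real.mul_rpow hx.le hΓ.le,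
          show Gamma x ^ (1-s) * (x ^ s * Gamma x ^ s)
            = Gamma x ^ (1-s) * Gamma x ^ s * x ^ s from by ring,
          ← Real.rpow_add hΓ]
        norm_num

lemma wendel_lower {s x : ℝ} (hs0 : 0 < s) (hs1 : s < 1) (hx : 0 < x) :
    x * Gamma x ≤ Gamma (x + s) * (x + s) ^ (1 - s) := by
  have hxs : 0 < x + s := by linarith
  have key := Real.Gamma_mul_add_mul_le_rpow_Gamma_mul_rpow_Gamma
    (s := x + s) (t := x + s + 1) hxs (by linarith) hs0 (by linarith : (0:ℝ) < 1 - s)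
    (by ring)
  rw [show s * (x + s) + (1 - s) * (x + s + 1) = x + 1 by ring,
    Real.Gamma_add_one hx.ne', Real.Gamma_add_one hxs.ne'] at key
  have hΓ : 0 < Gamma (x + s) := Real.Gamma_pos_of_pos hxs
  calc x * Gamma x ≤ Gamma (x + s) ^ s * ((x + s) * Gamma (x + s)) ^ (1 - s) := key
    _ = Gamma (x + s) * (x + s) ^ (1 - s) := by
        rw [Real.mul_rpow hxs.le hΓ.le,
          show Gamma (x+s) ^ s * ((x+s) ^ (1-s) * Gamma (x+s) ^ (1-s))
            = Gamma (x+s) ^ s * Gamma (x+s) ^ (1-s) * (x+s) ^ (1-s) from by ring,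
          ← Real.rpow_add hΓ]
        norm_num

lemma gamma_ratio {s : ℝ} (hs0 : 0 < s) (hs1 : s < 1) :
    Tendsto (fun x : ℝ => Gamma (x + s) / (Gamma x * x ^ s)) atTop (nhds 1) := by
  have hlow : Tendsto (fun x : ℝ => (x / (x + s)) ^ (1 - s)) atTop (nhds 1) := by
    have h1 : Tendsto (fun x : ℝ => 1 - s * (x + s)⁻¹) atTop (nhds 1) := by
      have h2 : Tendsto (fun x : ℝ => x + s) atTop atTop :=
        tendsto_atTop_add_const_right _ s tendsto_id
      have := (h2.inv_tendsto_atTop).const_mul s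
      simpa using tendsto_const_nhds.sub this
    have h3 : (fun x : ℝ => x / (x + s)) =ᶠ[atTop] fun x => 1 - s * (x + s)⁻¹ := by
      filter_upwards [eventually_gt_atTop 0] with x hx
      have hxs : x + s ≠ 0 := by positivity
      field_simp
      ring
    have h4 : Tendsto (fun x : ℝ => x / (x + s)) atTop (nhds 1) :=
      Tendsto.congr' h3.symm h1
    have := h4.rpow_const (p := 1 - s) (Or.inl one_ne_zero)
    simpa using this
  refine tendsto_of_tendsto_of_tendsto_of_le_of_le' hlow tendsto_const_nhds ?_ ?_
  · filter_upwards [eventually_gt_atTop 0] with x hx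
    have hxs : 0 < x + s := by linarith
    have hΓ : 0 < Gamma x := Real.Gamma_pos_of_pos hx
    have hpos : 0 < Gamma x * x ^ s := by positivity
    rw [le_div_iff₀ hpos]
    have hid : (x / (x + s)) ^ (1 - s) * (Gamma x * x ^ s)
        = x * Gamma x / (x + s) ^ (1 - s) := by
      rw [Real.div_rpow hx.le hxs.le, div_mul_eq_mul_div,
        show x ^ (1-s) * (Gamma x * x ^ s) = x ^ (1-s) * x ^ s * Gamma x from by ring,
        ← Real.rpow_add hx]
      norm_num
    rw [hid, div_le_iff₀ (by positivity)]
    exact wendel_lower hs0 hs1 hx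
  · filter_upwards [eventually_gt_atTop 0] with x hx
    have hΓ : 0 < Gamma x := Real.Gamma_pos_of_pos hx
    have hpos : 0 < Gamma x * x ^ s := by positivity
    rw [div_le_one hpos]
    exact wendel_upper hs0 hs1 hx

theorem p_asymptotic :
    Tendsto (fun α : ℝ => Real.sqrt (2*π*α) * p α) atTop (nhds 1) := by
  set r : ℝ → ℝ → ℝ := fun s x => Gamma (x + s) / (Gamma x * x ^ s) with hr
  have h12 : Tendsto (r (1/2)) atTop (nhds 1) := gamma_ratio (by norm_num) (by norm_num)
  have h34 : Tendsto (r (3/4)) atTop (nhds 1) := gamma_ratio (by norm_num) (by norm_num)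
  have h14 : Tendsto (r (1/4)) atTop (nhds 1) := gamma_ratio (by norm_num) (by norm_num)
  have hrat : Tendsto (fun α : ℝ => (α + 1/2) / (α + 1/4)) atTop (nhds 1) := by
    have h1 : Tendsto (fun α : ℝ => 1 + (1/4) * (α + 1/4)⁻¹) atTop (nhds 1) := by
      have h2 : Tendsto (fun α : ℝ => α + 1/4) atTop atTop :=
        tendsto_atTop_add_const_right _ _ tendsto_id
      have := (h2.inv_tendsto_atTop).const_mul (1/4 : ℝ)
      simpa using tendsto_const_nhds.add this
    refine Tendsto.congr' ?_ h1
    filter_upwards [eventually_gt_atTop 0] with α hα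
    have h' : α + 1/4 ≠ 0 := by positivity
    field_simp
    ring
  have hT : Tendsto (fun α : ℝ =>
      ((α + 1/2) / (α + 1/4)) * ((r (1/2) α) ^ 3 / (r (3/4) α * r (1/4) α)))
      atTop (nhds 1) := by
    have := hrat.mul (((h12.pow 3).div (h34.mul h14) (by norm_num)))
    simpa using this
  refine hT.congr' ?_
  filter_upwards [eventually_gt_atTop 0] with α hα
  have hΓ : 0 < Gamma α := Real.Gamma_pos_of_pos hα
  have hΓ12 : 0 < Gamma (α + 1/2) := Real.Gamma_pos_of_pos (by linarith)
  have hΓ34 : 0 < Gamma (α + 3/4) := Real.Gamma_pos_of_pos (by linarith)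
  have hΓ14 : 0 < Gamma (α + 1/4) := Real.Gamma_pos_of_pos (by linarith)
  have e32 : Gamma (α + 3/2) = (α + 1/2) * Gamma (α + 1/2) := by
    rw [show α + 3/2 = (α + 1/2) + 1 by ring, Real.Gamma_add_one (by positivity)]
  have e1 : Gamma (α + 1) = α * Gamma α := Real.Gamma_add_one hα.ne'
  have e54 : Gamma (α + 5/4) = (α + 1/4) * Gamma (α + 1/4) := by
    rw [show α + 5/4 = (α + 1/4) + 1 by ring, Real.Gamma_add_one (by positivity)]
  have htpos : 0 < α ^ ((1:ℝ)/4) := Real.rpow_pos_of_pos hα _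
  have ht2 : α ^ ((1:ℝ)/2) = (α ^ ((1:ℝ)/4)) ^ 2 := by
    rw [← Real.rpow_natCast (α ^ ((1:ℝ)/4)) 2, ← Real.rpow_mul hα.le]; norm_num
  have ht3 : α ^ ((3:ℝ)/4) = (α ^ ((1:ℝ)/4)) ^ 3 := by
    rw [← Real.rpow_natCast (α ^ ((1:ℝ)/4)) 3, ← Real.rpow_mul hα.le]; norm_num
  have ht4 : α = (α ^ ((1:ℝ)/4)) ^ 4 := by
    rw [← Real.rpow_natCast (α ^ ((1:ℝ)/4)) 4, ← Real.rpow_mul hα.le]; norm_num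
  have hsq : Real.sqrt (2*π*α) = Real.sqrt (2*π) * (α ^ ((1:ℝ)/4)) ^ 2 := by
    rw [Real.sqrt_mul (by positivity) α, Real.sqrt_eq_rpow α, ht2]
  have hsqpi : (0:ℝ) < Real.sqrt (2*π) := Real.sqrt_pos.mpr (by positivity)
  rw [hr]
  simp only [p]
  rw [hsq, e32, e1, e54, ht2, ht3]
  set A := Gamma (α + 1/2) with hA
  set B := Gamma (α + 3/4) with hB
  set C := Gamma (α + 1/4) with hC
  set G := Gamma α with hG
  set t := α ^ ((1:ℝ)/4) with ht
  have h14' : (α : ℝ) + 1/4 ≠ 0 := by positivity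
  rw [ht4]
  field_simp
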